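/- arXiv:2406.10407 — 3 statements merged into one kernel-verified Lean document; each statement's English description precedes it below -/
import Mathlib

section
/- Let n, m be positive integers, let C, A_1, …, A_m be real symmetric n×n matrices, let b ∈ ℝ^m, and let α ≥ 0. If the feasible set F = {X ∈ Δ_α : 𝒜(X) = b} is nonempty, then strong duality holds between the trace-bounded SDP and its dual: inf_{X ∈ F} ⟨C, X⟩ = sup_{λ ∈ ℝ^m} ( λᵀb + α · min{λ_min(C − 𝒜*(λ)), 0} ), and moreover the infimum on the left-hand side is attained by some X ∈ F. -/
open Matrix BigOperators

/-- Frobenius inner product of two real matrices: ⟨A, B⟩ = Σ_{i,j} A_{ij} B_{ij}. -/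
noncomputable def ip {n : ℕ} (A B : Matrix (Fin n) (Fin n) ℝ) : ℝ := ∑ i, ∑ j, A i j * B i j

/-- Δ_α = {X ⪰ 0 : trace(X) ≤ α}. -/
def Delta (n : ℕ) (α : ℝ) : Set (Matrix (Fin n) (Fin n) ℝ) :=
  {X | X.PosSemidef ∧ X.trace ≤ α}

/-- Smallest eigenvalue of a real symmetric (Hermitian) matrix. -/
noncomputable def lambdaMin {n : ℕ} (M : Matrix (Fin n) (Fin n) ℝ) : ℝ :=
  if h : M.IsHermitian then ⨅ i, h.eigenvalues i else 0

lemma herm_transpose {n : ℕ} {A : Matrix (Fin n) (Fin n) ℝ} (h : A.IsHermitian) : Aᵀ = A := by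
  ext i j; have := congrFun (congrFun h i) j
  simpa [Matrix.conjTranspose_apply] using this

lemma ip_eq_trace {n : ℕ} (A B : Matrix (Fin n) (Fin n) ℝ) (hA : Aᵀ = A) :
    ip A B = (A * B).trace := by
  simp [ip, Matrix.trace, Matrix.diag, Matrix.mul_apply]
  rw [Finset.sum_comm]
  congr 1; ext i; congr 1; ext j
  rw [← congrFun (congrFun hA j) i]; simp [Matrix.transpose_apply, mul_comm]

lemma ip_sub_left {n : ℕ} (A B X : Matrix (Fin n) (Fin n) ℝ) :
    ip (A - B) X = ip A X - ip B X := by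
  simp [ip, sub_mul, Finset.sum_sub_distrib]

lemma ip_sum_left {n m : ℕ} (f : Fin m → Matrix (Fin n) (Fin n) ℝ) (X : Matrix (Fin n) (Fin n) ℝ) :
    ip (∑ k, f k) X = ∑ k, ip (f k) X := by
  have h1 : ip (∑ k, f k) X = ∑ i, ∑ j, ∑ k, f k i j * X i j := by
    unfold ip
    refine Finset.sum_congr rfl fun i _ => Finset.sum_congr rfl fun j _ => ?_
    rw [Matrix.sum_apply i j _ f, Finset.sum_mul]
  rw [h1]
  rw [show (∑ i, ∑ j, ∑ k, f k i j * X i j) = ∑ i, ∑ k, ∑ j, f k i j * X i j from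
    Finset.sum_congr rfl fun i _ => Finset.sum_comm .., Finset.sum_comm]
  rfl

lemma ip_smul_left {n : ℕ} (c : ℝ) (A X : Matrix (Fin n) (Fin n) ℝ) :
    ip (c • A) X = c * ip A X := by
  simp [ip, Finset.mul_sum, mul_assoc]

lemma ip_smul_right {n : ℕ} (c : ℝ) (A X : Matrix (Fin n) (Fin n) ℝ) :
    ip A (c • X) = c * ip A X := by
  simp [ip, Finset.mul_sum]; congr 1; ext i; congr 1; ext j; ring

lemma ip_add_right {n : ℕ} (A X Y : Matrix (Fin n) (Fin n) ℝ) :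
    ip A (X + Y) = ip A X + ip A Y := by
  simp [ip, mul_add, Finset.sum_add_distrib]

lemma ip_continuous {n : ℕ} (A : Matrix (Fin n) (Fin n) ℝ) :
    Continuous fun X : Matrix (Fin n) (Fin n) ℝ => ip A X := by
  unfold ip
  apply continuous_finset_sum; intro i _
  apply continuous_finset_sum; intro j _
  exact (continuous_const.mul ((continuous_apply j).comp (continuous_apply i)))

lemma psd_trace_nonneg {n : ℕ} {X : Matrix (Fin n) (Fin n) ℝ} (hX : X.PosSemidef) :
    0 ≤ X.trace := by
  apply Finset.sum_nonneg
  intro i _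
  have := hX.dotProduct_mulVec_nonneg (Pi.single i 1)
  simpa [dotProduct, Matrix.mulVec, Pi.single_apply, Finset.sum_ite_eq] using this

lemma psd_ip_nonneg {n : ℕ} {M X : Matrix (Fin n) (Fin n) ℝ}
    (hM : M.PosSemidef) (hX : X.PosSemidef) : 0 ≤ (M * X).trace := by
  obtain ⟨B, hB⟩ : ∃ B : Matrix (Fin n) (Fin n) ℝ, X = Bᴴ * B := by
    open scoped MatrixOrder Matrix.Norms.L2Operator in
    exact CStarAlgebra.nonneg_iff_eq_star_mul_self.mp hX.nonneg
  have h1 : (M * X).trace = (B * M * Bᴴ).trace := by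
    rw [hB, ← Matrix.mul_assoc, Matrix.trace_mul_comm, ← Matrix.mul_assoc]
  rw [h1]
  exact psd_trace_nonneg (hM.mul_mul_conjTranspose_same B)



lemma lambdaMin_eq {n : ℕ} {M : Matrix (Fin n) (Fin n) ℝ} (hM : M.IsHermitian) :
    lambdaMin M = ⨅ i, hM.eigenvalues i := dif_pos hM

lemma lambdaMin_le {n : ℕ} {M : Matrix (Fin n) (Fin n) ℝ} (hM : M.IsHermitian) (i : Fin n) :
    lambdaMin M ≤ hM.eigenvalues i := by
  rw [lambdaMin_eq hM]
  exact ciInf_le (Set.Finite.bddBelow (Set.finite_range _)) i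

lemma exists_lambdaMin {n : ℕ} (hn : 0 < n) {M : Matrix (Fin n) (Fin n) ℝ} (hM : M.IsHermitian) :
    ∃ i, hM.eigenvalues i = lambdaMin M := by
  haveI : Nonempty (Fin n) := ⟨⟨0, hn⟩⟩
  obtain ⟨i, hi⟩ := Finite.exists_min hM.eigenvalues
  refine ⟨i, le_antisymm ?_ (lambdaMin_le hM i)⟩
  rw [lambdaMin_eq hM]
  exact le_ciInf hi

lemma sub_lambdaMin_psd {n : ℕ} (hn : 0 < n) {M : Matrix (Fin n) (Fin n) ℝ} (hM : M.IsHermitian) :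
    (M - lambdaMin M • 1).PosSemidef := by
  haveI : Nonempty (Fin n) := ⟨⟨0, hn⟩⟩
  set c := lambdaMin M
  set U := (hM.eigenvectorUnitary : Matrix (Fin n) (Fin n) ℝ)
  have hU : U * star U = 1 := Matrix.mem_unitaryGroup_iff.mp hM.eigenvectorUnitary.2
  have hspec := hM.spectral_theorem
  rw [Unitary.conjStarAlgAut_apply] at hspec
  have key : M - c • 1 = U * Matrix.diagonal (fun i => hM.eigenvalues i - c) * star U := by
    have h1 : (c • 1 : Matrix (Fin n) (Fin n) ℝ) = U * (c • 1) * star U := by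
      rw [Matrix.mul_smul, Matrix.smul_mul, Matrix.mul_one, hU]
    calc M - c • 1 = U * Matrix.diagonal (RCLike.ofReal ∘ hM.eigenvalues) * star U
          - U * (c • 1) * star U := by rw [← hspec, ← h1]
      _ = U * (Matrix.diagonal (RCLike.ofReal ∘ hM.eigenvalues) - c • 1) * star U := by
          rw [Matrix.mul_sub, Matrix.sub_mul]
      _ = U * Matrix.diagonal (fun i => hM.eigenvalues i - c) * star U := by
          congr 1; congr 1
          ext i j
          by_cases h : i = j <;>
            simp [Matrix.diagonal_apply, h, Matrix.one_apply, Matrix.sub_apply]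
  rw [key, Matrix.star_eq_conjTranspose]
  exact (Matrix.posSemidef_diagonal_iff.mpr fun i => sub_nonneg.mpr (lambdaMin_le hM i)).mul_mul_conjTranspose_same U

lemma exists_unit_witness {n : ℕ} (hn : 0 < n) {M : Matrix (Fin n) (Fin n) ℝ}
    (hM : M.IsHermitian) :
    ∃ X : Matrix (Fin n) (Fin n) ℝ, X.PosSemidef ∧ X.trace = 1 ∧ ip M X = lambdaMin M := by
  obtain ⟨i0, hi0⟩ := exists_lambdaMin hn hM
  set v : Fin n → ℝ := ⇑(hM.eigenvectorBasis i0) with hv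
  have hMv : M *ᵥ v = lambdaMin M • v := by
    rw [← hi0]; exact hM.mulVec_eigenvectorBasis i0
  have hnorm : ∑ i, v i * v i = 1 := by
    have h1 : @inner ℝ _ _ (hM.eigenvectorBasis i0) (hM.eigenvectorBasis i0) = 1 := by
      rw [real_inner_self_eq_norm_sq, hM.eigenvectorBasis.orthonormal.1 i0]; norm_num
    rw [← h1, PiLp.inner_apply]
    simp [RCLike.inner_apply, hv, pow_two]
  refine ⟨Matrix.vecMulVec v v, ?_, ?_, ?_⟩
  · refine Matrix.PosSemidef.of_dotProduct_mulVec_nonneg ?_ ?_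
    · ext i j
      simp [Matrix.vecMulVec_apply, Matrix.conjTranspose_apply, mul_comm]
    · intro x
      have h2 : Matrix.vecMulVec v v *ᵥ x = (v ⬝ᵥ x) • v := by
        ext i
        simp only [Matrix.mulVec, Matrix.vecMulVec_apply, dotProduct, Pi.smul_apply,
          smul_eq_mul, Finset.mul_sum, Finset.sum_mul]
        exact Finset.sum_congr rfl fun k _ => by ring
      have hsx : star x = x := funext fun i => star_trivial _
      rw [h2, hsx, dotProduct_smul, smul_eq_mul, dotProduct_comm x v]
      exact mul_self_nonneg _
  · simp [Matrix.trace, Matrix.diag, Matrix.vecMulVec_apply, hnorm]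
  · have : ip M (Matrix.vecMulVec v v) = v ⬝ᵥ (M *ᵥ v) := by
      simp [ip, Matrix.vecMulVec_apply, dotProduct, Matrix.mulVec, Finset.mul_sum]
      rw [Finset.sum_comm]
      refine Finset.sum_congr rfl fun i _ => Finset.sum_congr rfl fun j _ => ?_
      have h := congrFun (congrFun hM i) j
      simp only [Matrix.conjTranspose_apply, star_trivial] at h
      rw [← h]
      ring
    rw [this, hMv]
    simp [dotProduct, Finset.mul_sum]
    rw [show ∑ i, v i * (lambdaMin M * v i) = lambdaMin M * ∑ i, v i * v i by
      rw [Finset.mul_sum]; exact Finset.sum_congr rfl fun i _ => by ring]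
    rw [hnorm, mul_one]


lemma psd_smul {n : ℕ} {X : Matrix (Fin n) (Fin n) ℝ} (hX : X.PosSemidef) {a : ℝ} (ha : 0 ≤ a) :
    (a • X).PosSemidef := by
  refine Matrix.PosSemidef.of_dotProduct_mulVec_nonneg ?_ ?_
  · ext i j
    have h := congrFun (congrFun hX.1 i) j
    simp only [Matrix.conjTranspose_apply, star_trivial] at h ⊢
    simp [Matrix.smul_apply, h]
  · intro x
    have := hX.dotProduct_mulVec_nonneg x
    rw [Matrix.smul_mulVec, dotProduct_smul, smul_eq_mul]
    exact mul_nonneg ha this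

lemma delta_convex {n : ℕ} {α : ℝ} : Convex ℝ (Delta n α) := by
  intro X hX Y hY a b ha hb hab
  refine ⟨(psd_smul hX.1 ha).add (psd_smul hY.1 hb), ?_⟩
  rw [Matrix.trace_add, Matrix.trace_smul, Matrix.trace_smul]
  calc a • X.trace + b • Y.trace ≤ a • α + b • α := by
        gcongr
        · exact hX.2
        · exact hY.2
    _ = α := by rw [smul_eq_mul, smul_eq_mul, ← add_mul, hab, one_mul]

lemma delta_diag_nonneg {n : ℕ} {X : Matrix (Fin n) (Fin n) ℝ} (hX : X.PosSemidef) (i : Fin n) :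
    0 ≤ X i i := by
  have := hX.dotProduct_mulVec_nonneg (Pi.single i 1)
  simpa [dotProduct, Matrix.mulVec, Pi.single_apply, Finset.sum_ite_eq] using this

lemma delta_entry_bound {n : ℕ} {α : ℝ} (hα : 0 ≤ α) {X : Matrix (Fin n) (Fin n) ℝ}
    (hX : X ∈ Delta n α) (i j : Fin n) : X i j ∈ Set.Icc (-α) α := by
  obtain ⟨hpsd, htr⟩ := hX
  have hdiag : ∀ k, 0 ≤ X k k := delta_diag_nonneg hpsd
  have hsum : ∀ k, X k k ≤ α := by
    intro k
    calc X k k ≤ X.trace := Finset.single_le_sum (fun l _ => hdiag l) (Finset.mem_univ k)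
      _ ≤ α := htr
  by_cases hij : i = j
  · subst hij
    exact ⟨le_trans (neg_nonpos.mpr hα) (hdiag i), hsum i⟩
  · have hsym : X j i = X i j := by
      have h := congrFun (congrFun hpsd.1 i) j
      simpa [Matrix.conjTranspose_apply] using h
    have hpair : X i i + X j j ≤ α := by
      calc X i i + X j j = ∑ k ∈ ({i, j} : Finset (Fin n)), X k k := by
            rw [Finset.sum_insert (by simpa using hij), Finset.sum_singleton]
        _ ≤ X.trace := Finset.sum_le_sum_of_subset_of_nonneg (Finset.subset_univ _)
            (fun k _ _ => hdiag k)
        _ ≤ α := htr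
    have key : ∀ (c : ℝ), 0 ≤ X i i + c * X i j + c * X j i + c * c * X j j := by
      intro c
      have h := hpsd.dotProduct_mulVec_nonneg ((Pi.single i 1 : Fin n → ℝ) + c • (Pi.single j 1 : Fin n → ℝ))
      have hsx : star ((Pi.single i 1 : Fin n → ℝ) + c • (Pi.single j 1 : Fin n → ℝ))
          = (Pi.single i 1 : Fin n → ℝ) + c • (Pi.single j 1 : Fin n → ℝ) :=
        funext fun k => star_trivial _
      rw [hsx] at h
      simp only [Matrix.mulVec_add, Matrix.mulVec_smul, dotProduct_add,
        add_dotProduct, smul_dotProduct, dotProduct_smul,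
        Matrix.mulVec_single, single_dotProduct, smul_eq_mul, mul_one] at h
      simp only [MulOpposite.op_one, one_smul, one_mul, Matrix.col_apply] at h
      nlinarith [h]
    have h1 := key 1
    have h2 := key (-1)
    constructor <;> nlinarith [hpair, hsym, hdiag i, hdiag j, hα]

lemma continuous_entry {n : ℕ} (i j : Fin n) :
    Continuous fun X : Matrix (Fin n) (Fin n) ℝ => X i j :=
  (continuous_apply j).comp (continuous_apply i)

lemma isClosed_posSemidef {n : ℕ} : IsClosed {X : Matrix (Fin n) (Fin n) ℝ | X.PosSemidef} := by
  have hherm : {X : Matrix (Fin n) (Fin n) ℝ | X.IsHermitian}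
      = ⋂ i, ⋂ j, {X | X j i = X i j} := by
    ext X
    simp only [Set.mem_setOf_eq, Set.mem_iInter, Matrix.IsHermitian, ← Matrix.ext_iff,
      Matrix.conjTranspose_apply, star_trivial]
  have h1 : IsClosed {X : Matrix (Fin n) (Fin n) ℝ | X.IsHermitian} := by
    rw [hherm]
    exact isClosed_iInter fun i => isClosed_iInter fun j =>
      isClosed_eq (continuous_entry j i) (continuous_entry i j)
  have h2 : IsClosed {X : Matrix (Fin n) (Fin n) ℝ | ∀ x, 0 ≤ star x ⬝ᵥ X *ᵥ x} := by
    have : {X : Matrix (Fin n) (Fin n) ℝ | ∀ x, 0 ≤ star x ⬝ᵥ X *ᵥ x}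
        = ⋂ x : Fin n → ℝ, {X | 0 ≤ star x ⬝ᵥ X *ᵥ x} := by
      ext X; simp
    rw [this]
    refine isClosed_iInter fun x => isClosed_le continuous_const ?_
    have : Continuous fun X : Matrix (Fin n) (Fin n) ℝ => star x ⬝ᵥ X *ᵥ x := by
      unfold dotProduct Matrix.mulVec
      refine continuous_finset_sum _ fun k _ => Continuous.mul continuous_const ?_
      exact continuous_finset_sum _ fun l _ => (continuous_entry k l).mul continuous_const
    exact this
  have : {X : Matrix (Fin n) (Fin n) ℝ | X.PosSemidef}
      = {X | X.IsHermitian} ∩ {X | ∀ x, 0 ≤ star x ⬝ᵥ X *ᵥ x} := by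
    ext X; exact ⟨fun h => ⟨h.1, h.dotProduct_mulVec_nonneg⟩,
      fun h => Matrix.PosSemidef.of_dotProduct_mulVec_nonneg h.1 h.2⟩
  rw [this]
  exact h1.inter h2

lemma continuous_trace {n : ℕ} : Continuous fun X : Matrix (Fin n) (Fin n) ℝ => X.trace := by
  unfold Matrix.trace Matrix.diag
  exact continuous_finset_sum _ fun k _ => continuous_entry k k

lemma isClosed_delta {n : ℕ} {α : ℝ} : IsClosed (Delta n α) :=
  isClosed_posSemidef.inter (isClosed_le continuous_trace continuous_const)

lemma isCompact_delta {n : ℕ} {α : ℝ} (hα : 0 ≤ α) : IsCompact (Delta n α) := by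
  have hbox : IsCompact (Set.univ.pi fun _ : Fin n =>
      (Set.univ.pi fun _ : Fin n => Set.Icc (-α) α)) :=
    isCompact_univ_pi fun i => isCompact_univ_pi fun j => isCompact_Icc
  refine IsCompact.of_isClosed_subset hbox isClosed_delta ?_
  intro X hX
  intro i _ j _
  exact delta_entry_bound hα hX i j

lemma ip_zero_right {n : ℕ} (A : Matrix (Fin n) (Fin n) ℝ) : ip A 0 = 0 := by
  simp [ip]

lemma hermitian_combo {n m : ℕ} {C : Matrix (Fin n) (Fin n) ℝ} (hC : C.IsHermitian)
    {A : Fin m → Matrix (Fin n) (Fin n) ℝ} (hA : ∀ i, (A i).IsHermitian) (lam : Fin m → ℝ) :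
    (C - ∑ i, lam i • A i).IsHermitian := by
  have hsum : (∑ i, lam i • A i).IsHermitian := by
    unfold Matrix.IsHermitian
    rw [Matrix.conjTranspose_sum]
    refine Finset.sum_congr rfl fun i _ => ?_
    rw [Matrix.conjTranspose_smul, hA i]
    simp
  exact hC.sub hsum

lemma ip_combo {n m : ℕ} (C : Matrix (Fin n) (Fin n) ℝ)
    (A : Fin m → Matrix (Fin n) (Fin n) ℝ) (lam : Fin m → ℝ) (X : Matrix (Fin n) (Fin n) ℝ) :
    ip (C - ∑ i, lam i • A i) X = ip C X - ∑ i, lam i * ip (A i) X := by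
  rw [ip_sub_left, ip_sum_left]
  congr 1
  exact Finset.sum_congr rfl fun i _ => ip_smul_left _ _ _

lemma key_lb {n : ℕ} (hn : 0 < n) {α : ℝ} {M X : Matrix (Fin n) (Fin n) ℝ}
    (hM : M.IsHermitian) (hX : X ∈ Delta n α) :
    α * min (lambdaMin M) 0 ≤ ip M X := by
  have hpsd := sub_lambdaMin_psd hn hM
  have h0 : 0 ≤ ((M - lambdaMin M • 1) * X).trace := psd_ip_nonneg hpsd hX.1
  have hexp : ((M - lambdaMin M • 1) * X).trace = (M * X).trace - lambdaMin M * X.trace := by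
    rw [Matrix.sub_mul, Matrix.trace_sub, Matrix.smul_mul, Matrix.one_mul, Matrix.trace_smul]
    simp
  rw [hexp] at h0
  have hip : ip M X = (M * X).trace := ip_eq_trace M X (herm_transpose hM)
  have htr0 : 0 ≤ X.trace := psd_trace_nonneg hX.1
  rcases le_or_gt 0 (lambdaMin M) with hc | hc
  · rw [min_eq_right hc, mul_zero, hip]
    nlinarith
  · rw [min_eq_left hc.le, hip]
    have h1 : lambdaMin M * α ≤ lambdaMin M * X.trace :=
      mul_le_mul_of_nonpos_left hX.2 hc.le
    nlinarith

/-- weak duality -/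
lemma weak_duality {n m : ℕ} (hn : 0 < n) {C : Matrix (Fin n) (Fin n) ℝ} (hC : C.IsHermitian)
    {A : Fin m → Matrix (Fin n) (Fin n) ℝ} (hA : ∀ i, (A i).IsHermitian)
    {b : Fin m → ℝ} {α : ℝ} {X : Matrix (Fin n) (Fin n) ℝ}
    (hX : X ∈ Delta n α) (hfeas : ∀ i, ip (A i) X = b i) (lam : Fin m → ℝ) :
    (∑ i, lam i * b i) + α * min (lambdaMin (C - ∑ i, lam i • A i)) 0 ≤ ip C X := by
  have hMh := hermitian_combo hC hA lam
  have h1 := key_lb hn hMh hX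
  rw [ip_combo] at h1
  have h2 : ∑ i, lam i * ip (A i) X = ∑ i, lam i * b i :=
    Finset.sum_congr rfl fun i _ => by rw [hfeas i]
  linarith [h1, h2.ge, h2.le]

/-- Strong duality for the trace-bounded SDP: if the feasible set
`F = {X ∈ Δ_α : 𝒜(X) = b}` is nonempty, the primal optimum is attained by some
`Xstar ∈ F`, and its value is the least upper bound of the dual values
`λᵀb + α · min{λ_min(C − 𝒜*(λ)), 0}`. -/
theorem trace_bounded_sdp_strong_duality
    (n m : ℕ) (hn : 0 < n) (hm : 0 < m)
    (C : Matrix (Fin n) (Fin n) ℝ) (hC : C.IsHermitian)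
    (A : Fin m → Matrix (Fin n) (Fin n) ℝ) (hA : ∀ i, (A i).IsHermitian)
    (b : Fin m → ℝ) (α : ℝ) (hα : 0 ≤ α)
    (hfeas : ∃ X ∈ Delta n α, ∀ i, ip (A i) X = b i) :
    ∃ Xstar ∈ Delta n α, (∀ i, ip (A i) Xstar = b i) ∧
      IsLeast {v : ℝ | ∃ X ∈ Delta n α, (∀ i, ip (A i) X = b i) ∧ v = ip C X}
        (ip C Xstar) ∧
      IsLUB {v : ℝ | ∃ lam : Fin m → ℝ,
          v = (∑ i, lam i * b i) + α * min (lambdaMin (C - ∑ i, lam i • A i)) 0}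
        (ip C Xstar) := by
  classical
  set F : Set (Matrix (Fin n) (Fin n) ℝ) := Delta n α ∩ {X | ∀ i, ip (A i) X = b i} with hFdef
  have hFclosed : IsClosed {X : Matrix (Fin n) (Fin n) ℝ | ∀ i, ip (A i) X = b i} := by
    have : {X : Matrix (Fin n) (Fin n) ℝ | ∀ i, ip (A i) X = b i}
        = ⋂ i, {X | ip (A i) X = b i} := by ext X; simp
    rw [this]
    exact isClosed_iInter fun i => isClosed_eq (ip_continuous (A i)) continuous_const
  have hFcpt : IsCompact F := (isCompact_delta hα).inter_right hFclosed
  have hFne : F.Nonempty := by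
    obtain ⟨X, hX, hfe⟩ := hfeas; exact ⟨X, hX, hfe⟩
  obtain ⟨Xstar, hXF, hminOn⟩ := hFcpt.exists_isMinOn hFne (ip_continuous C).continuousOn
  have hmin : ∀ X ∈ F, ip C Xstar ≤ ip C X := fun X hX => hminOn hX
  obtain ⟨hXD, hXfe⟩ := hXF
  refine ⟨Xstar, hXD, hXfe, ?_, ?_⟩
  · refine ⟨⟨Xstar, hXD, hXfe, rfl⟩, ?_⟩
    rintro v ⟨X, hX1, hX2, rfl⟩
    exact hmin X ⟨hX1, hX2⟩
  constructor
  · rintro v ⟨lam, rfl⟩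
    exact weak_duality hn hC hA hXD hXfe lam
  intro ub hub
  by_contra hp
  push_neg at hp
  set p := ip C Xstar with hpdef
  set Φ : Matrix (Fin n) (Fin n) ℝ → (Fin m → ℝ) × ℝ :=
    fun X => ((fun i => ip (A i) X - b i), ip C X) with hΦdef
  have hΦcont : Continuous Φ := by
    refine Continuous.prodMk ?_ (ip_continuous C)
    exact continuous_pi fun i => (ip_continuous (A i)).sub continuous_const
  set G := Φ '' Delta n α with hGdef
  have hGconv : Convex ℝ G := by
    rintro _ ⟨X1, hX1, rfl⟩ _ ⟨X2, hX2, rfl⟩ a c ha hc hac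
    refine ⟨a • X1 + c • X2, delta_convex hX1 hX2 ha hc hac, ?_⟩
    have hi : ∀ Mt : Matrix (Fin n) (Fin n) ℝ,
        ip Mt (a • X1 + c • X2) = a * ip Mt X1 + c * ip Mt X2 := by
      intro Mt; rw [ip_add_right, ip_smul_right, ip_smul_right]
    have h1 : (fun i => ip (A i) (a • X1 + c • X2) - b i)
        = a • (fun i => ip (A i) X1 - b i) + c • (fun i => ip (A i) X2 - b i) := by
      funext i
      simp only [Pi.add_apply, Pi.smul_apply, smul_eq_mul]
      rw [hi (A i)]
      have hb' : a * b i + c * b i = b i := by rw [← add_mul, hac, one_mul]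
      linarith
    have h2 : ip C (a • X1 + c • X2) = a * ip C X1 + c * ip C X2 := hi C
    show Φ (a • X1 + c • X2) = a • Φ X1 + c • Φ X2
    simp only [hΦdef, Prod.smul_mk, Prod.mk_add_mk, smul_eq_mul]
    exact Prod.ext h1 (by rw [h2])
  have hGcpt : IsCompact G := (isCompact_delta hα).image hΦcont
  have hx0 : ((0 : Fin m → ℝ), ub) ∉ G := by
    rintro ⟨X, hXDe, hEq⟩
    have h1 : ∀ i, ip (A i) X = b i := by
      intro i
      have := congrFun (congrArg Prod.fst hEq) i
      simpa [hΦdef, sub_eq_zero] using this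
    have h2 : ip C X = ub := congrArg Prod.snd hEq
    have h3 := hmin X ⟨hXDe, h1⟩
    rw [h2] at h3
    exact absurd h3 (not_le.mpr hp)
  obtain ⟨f, u, hfu, hsep⟩ := geometric_hahn_banach_point_closed hGconv hGcpt.isClosed hx0
  set μ : ℝ := f ((0 : Fin m → ℝ), (1 : ℝ)) with hμdef
  set lam0 : Fin m → ℝ := fun i => f ((fun j => if i = j then (1:ℝ) else 0), 0) with hlam0def
  have hf : ∀ (y : Fin m → ℝ) (t : ℝ), f (y, t) = (∑ i, y i * lam0 i) + t * μ := by
    intro y t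
    have hsplit : ((y, t) : (Fin m → ℝ) × ℝ) = (y, 0) + (0, t) := by simp
    rw [hsplit, map_add]
    congr 1
    · have hg := ((f : ((Fin m → ℝ) × ℝ) →ₗ[ℝ] ℝ).comp
        (LinearMap.inl ℝ (Fin m → ℝ) ℝ)).pi_apply_eq_sum_univ y
      simpa [LinearMap.comp_apply, LinearMap.inl_apply, smul_eq_mul, hlam0def] using hg
    · have ht : ((0 : Fin m → ℝ), t) = t • ((0 : Fin m → ℝ), (1:ℝ)) := by simp
      rw [ht, f.map_smul, smul_eq_mul, hμdef]
  have hfu' : ub * μ < u := by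
    rw [hf 0 ub] at hfu
    simpa using hfu
  have hsep' : ∀ X ∈ Delta n α,
      u < (∑ i, (ip (A i) X - b i) * lam0 i) + ip C X * μ := by
    intro X hX
    have h := hsep (Φ X) ⟨X, hX, rfl⟩
    rwa [show Φ X = ((fun i => ip (A i) X - b i), ip C X) from rfl, hf] at h
  have hup : u < p * μ := by
    have h := hsep' Xstar hXD
    have hz : ∑ i, (ip (A i) Xstar - b i) * lam0 i = 0 := by
      refine Finset.sum_eq_zero fun i _ => ?_
      rw [hXfe i, sub_self, zero_mul]
    rw [hz, zero_add] at h
    exact h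
  have hμpos : 0 < μ := by
    by_contra hμ
    push_neg at hμ
    nlinarith
  set lam : Fin m → ℝ := fun i => -(lam0 i) / μ with hlamdef
  set M : Matrix (Fin n) (Fin n) ℝ := C - ∑ i, lam i • A i with hMdef
  have hMh : M.IsHermitian := hermitian_combo hC hA lam
  have hstep : ∀ X : Matrix (Fin n) (Fin n) ℝ,
      (ip M X + ∑ i, lam i * b i) * μ = ip C X * μ + ∑ i, (ip (A i) X - b i) * lam0 i := by
    intro X
    rw [hMdef, ip_combo]
    have e1 : ∀ i, lam i * μ = -(lam0 i) := by
      intro i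
      rw [hlamdef]
      field_simp
    have e2 : (∑ i, lam i * ip (A i) X) * μ = ∑ i, -(lam0 i) * ip (A i) X := by
      rw [Finset.sum_mul]
      exact Finset.sum_congr rfl fun i _ => by rw [mul_right_comm, e1 i]
    have e3 : (∑ i, lam i * b i) * μ = ∑ i, -(lam0 i) * b i := by
      rw [Finset.sum_mul]
      exact Finset.sum_congr rfl fun i _ => by rw [mul_right_comm, e1 i]
    have e4 : ∑ i, (ip (A i) X - b i) * lam0 i
        = -(∑ i, -(lam0 i) * ip (A i) X) + ∑ i, -(lam0 i) * b i := by
      rw [← Finset.sum_neg_distrib, ← Finset.sum_add_distrib]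
      exact Finset.sum_congr rfl fun i _ => by ring
    have expand : (ip C X - ∑ i, lam i * ip (A i) X + ∑ i, lam i * b i) * μ
        = ip C X * μ - (∑ i, lam i * ip (A i) X) * μ + (∑ i, lam i * b i) * μ := by ring
    rw [expand, e2, e3, e4]
    ring
  have hkey : ∀ X ∈ Delta n α, u / μ < ip M X + ∑ i, lam i * b i := by
    intro X hX
    rw [div_lt_iff₀ hμpos, hstep X]
    linarith [hsep' X hX]
  have h0mem : (0 : Matrix (Fin n) (Fin n) ℝ) ∈ Delta n α := by
    refine ⟨Matrix.PosSemidef.zero, ?_⟩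
    rw [Matrix.trace_zero]; exact hα
  have hb1 := hkey 0 h0mem
  rw [ip_zero_right, zero_add] at hb1
  obtain ⟨W, hWpsd, hWtr, hWip⟩ := exists_unit_witness hn hMh
  have hWD : α • W ∈ Delta n α := by
    refine ⟨psd_smul hWpsd hα, ?_⟩
    rw [Matrix.trace_smul, hWtr, smul_eq_mul, mul_one]
  have hb2 := hkey (α • W) hWD
  rw [ip_smul_right, hWip] at hb2
  have hd : u / μ < (∑ i, lam i * b i) + α * min (lambdaMin M) 0 := by
    rcases le_or_gt 0 (lambdaMin M) with h | h
    · rw [min_eq_right h, mul_zero, add_zero]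
      exact hb1
    · rw [min_eq_left h.le]
      linarith
  have hub2 : ub < u / μ := by
    rw [lt_div_iff₀ hμpos]
    linarith
  have hmem : ((∑ i, lam i * b i) + α * min (lambdaMin M) 0) ≤ ub := hub ⟨lam, by rw [hMdef]⟩
  linarith
end

section
/- Consider the SDP over 3×3 real symmetric positive semidefinite matrices X: minimize ⟨C, X⟩ where C has entries C_{12} = C_{21} = 1/2 and all other entries 0, subject to the four constraints ⟨B_1, X⟩ = 0, ⟨B_2, X⟩ = 0, ⟨B_3, X⟩ = 0, ⟨B_4, X⟩ = −2, where B_1 has entries (B_1)_{13} = (B_1)_{31} = 1 and zeros elsewhere, B_2 has entries (B_2)_{23} = (B_2)_{32} = 1 and zeros elsewhere, B_3 has entry (B_3)_{11} = 1 and zeros elsewhere, and B_4 has entries (B_4)_{12} = (B_4)_{21} = 1, (B_4)_{33} = −2 and zeros elsewhere. This SDP is feasible and its optimal value equals 0; in fact every feasible X satisfies ⟨C, X⟩ = 0. -/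
open Matrix BigOperators

lemma lin_nonneg_coeff_zero {a b : ℝ} (h : ∀ t : ℝ, 0 ≤ a * t + b) : a = 0 := by
  by_contra ha
  have := h (-(b+1)/a)
  rw [mul_div_cancel₀ _ ha] at this
  linarith

lemma psd_offdiag_zero (X : Matrix (Fin 3) (Fin 3) ℝ) (hX : X.PosSemidef)
    (h0 : X 0 0 = 0) : X 0 1 = 0 := by
  have hsym : X 1 0 = X 0 1 := by
    have := hX.1
    have := congrFun (congrFun this 1) 0
    simpa [Matrix.conjTranspose_apply] using this.symm
  have key : ∀ t : ℝ, 0 ≤ (2 * X 0 1) * t + X 1 1 := by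
    intro t
    have := hX.dotProduct_mulVec_nonneg ![t, 1, 0]
    simp [Matrix.mulVec, dotProduct, Fin.sum_univ_three, h0, hsym] at this
    linarith [this]
  have := lin_nonneg_coeff_zero key
  linarith

/-- The duality-gap example primal SDP: it is feasible and every feasible `X ⪰ 0`
(satisfying `⟨B₁,X⟩ = ⟨B₂,X⟩ = ⟨B₃,X⟩ = 0` and `⟨B₄,X⟩ = −2`) has objective
`⟨C, X⟩ = 0`; hence the optimal value is `0`. -/
theorem duality_gap_example_primal :
    let C : Matrix (Fin 3) (Fin 3) ℝ := !![0, 1/2, 0; 1/2, 0, 0; 0, 0, 0]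
    let B1 : Matrix (Fin 3) (Fin 3) ℝ := !![0, 0, 1; 0, 0, 0; 1, 0, 0]
    let B2 : Matrix (Fin 3) (Fin 3) ℝ := !![0, 0, 0; 0, 0, 1; 0, 1, 0]
    let B3 : Matrix (Fin 3) (Fin 3) ℝ := !![1, 0, 0; 0, 0, 0; 0, 0, 0]
    let B4 : Matrix (Fin 3) (Fin 3) ℝ := !![0, 1, 0; 1, 0, 0; 0, 0, -2]
    (∃ X : Matrix (Fin 3) (Fin 3) ℝ, X.PosSemidef ∧
        ip B1 X = 0 ∧ ip B2 X = 0 ∧ ip B3 X = 0 ∧ ip B4 X = -2) ∧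
    (∀ X : Matrix (Fin 3) (Fin 3) ℝ, X.PosSemidef →
        ip B1 X = 0 → ip B2 X = 0 → ip B3 X = 0 → ip B4 X = -2 → ip C X = 0) ∧
    IsLeast {v : ℝ | ∃ X : Matrix (Fin 3) (Fin 3) ℝ, X.PosSemidef ∧
        ip B1 X = 0 ∧ ip B2 X = 0 ∧ ip B3 X = 0 ∧ ip B4 X = -2 ∧ v = ip C X} 0 := by
  intro C B1 B2 B3 B4
  have hXpsd : (!![0,0,0;0,0,0;0,0,(1:ℝ)]).PosSemidef := by
    have : (!![0,0,0;0,0,0;0,0,(1:ℝ)]) = Matrix.diagonal ![0,0,1] := by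
      ext i j; fin_cases i <;> fin_cases j <;> simp [Matrix.diagonal, Matrix.vecHead, Matrix.vecTail]
    rw [this]
    exact Matrix.PosSemidef.diagonal (by intro i; fin_cases i <;> norm_num)
  have hfeas : (!![0,0,0;0,0,0;0,0,(1:ℝ)]).PosSemidef ∧
      ip B1 !![0,0,0;0,0,0;0,0,(1:ℝ)] = 0 ∧ ip B2 !![0,0,0;0,0,0;0,0,(1:ℝ)] = 0 ∧
      ip B3 !![0,0,0;0,0,0;0,0,(1:ℝ)] = 0 ∧ ip B4 !![0,0,0;0,0,0;0,0,(1:ℝ)] = -2 := by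
    refine ⟨hXpsd, ?_, ?_, ?_, ?_⟩ <;> simp [ip, Fin.sum_univ_three, Matrix.vecHead, Matrix.vecTail, B1, B2, B3, B4] <;> norm_num
  have hall : ∀ X : Matrix (Fin 3) (Fin 3) ℝ, X.PosSemidef →
      ip B1 X = 0 → ip B2 X = 0 → ip B3 X = 0 → ip B4 X = -2 → ip C X = 0 := by
    intro X hX h1 h2 h3 h4
    have h00 : X 0 0 = 0 := by
      simpa [ip, Fin.sum_univ_three, Matrix.vecHead, Matrix.vecTail, B3] using h3
    have h01 : X 0 1 = 0 := psd_offdiag_zero X hX h00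
    have hsym : X 1 0 = X 0 1 := by
      have := congrFun (congrFun hX.1 1) 0
      simpa [Matrix.conjTranspose_apply] using this.symm
    simp [ip, Fin.sum_univ_three, Matrix.vecHead, Matrix.vecTail, C, h01, hsym]
  refine ⟨⟨_, hfeas⟩, hall, ?_, ?_⟩
  · exact ⟨_, hfeas.1, hfeas.2.1, hfeas.2.2.1, hfeas.2.2.2.1, hfeas.2.2.2.2,
      (hall _ hfeas.1 hfeas.2.1 hfeas.2.2.1 hfeas.2.2.2.1 hfeas.2.2.2.2).symm⟩
  · rintro v ⟨X, hX, h1, h2, h3, h4, rfl⟩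
    exact (hall X hX h1 h2 h3 h4).ge
end

section
/- Consider the trace-bounded dual function over λ = (λ_1, λ_2, λ_3, λ_4) ∈ ℝ^4: g(λ) = −2λ_4 + min{0, λ_min(M(λ))}, where M(λ) is the 3×3 real symmetric matrix with rows [−λ_3, 1/2 − λ_4, −λ_1], [1/2 − λ_4, 0, −λ_2], [−λ_1, −λ_2, 2λ_4]. Then sup_{λ ∈ ℝ^4} g(λ) = 0, and the supremum is attained at λ_1 = λ_2 = λ_3 = 0, λ_4 = −1/2. Hence for the corresponding primal SDP with added trace bound trace(X) ≤ 1 (whose optimal value is 0), the duality gap vanishes. -/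
open Matrix BigOperators

section helpers

variable {n : ℕ}

lemma dot_eq_inner (u v : EuclideanSpace ℝ (Fin n)) :
    (inner ℝ u v : ℝ) = (WithLp.equiv 2 (Fin n → ℝ) u) ⬝ᵥ (WithLp.equiv 2 (Fin n → ℝ) v) := by
  simp [PiLp.inner_apply, dotProduct, RCLike.inner_apply, mul_comm]

lemma le_lambdaMin [NeZero n] (A : Matrix (Fin n) (Fin n) ℝ) (hA : A.IsHermitian) (c : ℝ)
    (h : ∀ x : Fin n → ℝ, c * (x ⬝ᵥ x) ≤ x ⬝ᵥ (A *ᵥ x)) : c ≤ lambdaMin A := by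
  rw [lambdaMin, dif_pos hA]
  refine le_ciInf fun i => ?_
  set v : Fin n → ℝ := ⇑(hA.eigenvectorBasis i) with hv
  have hvv : v ⬝ᵥ v = 1 := by
    have h1 := hA.eigenvectorBasis.orthonormal.1 i
    have h2 : (inner ℝ (hA.eigenvectorBasis i) (hA.eigenvectorBasis i) : ℝ) = 1 := by
      rw [real_inner_self_eq_norm_sq, h1]; norm_num
    rw [dot_eq_inner] at h2
    exact h2
  have h2 := h v
  rw [hv, hA.mulVec_eigenvectorBasis, ← hv, hvv, mul_one] at h2
  calc c ≤ v ⬝ᵥ (hA.eigenvalues i • v) := h2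
    _ = hA.eigenvalues i := by rw [dotProduct_smul, smul_eq_mul, hvv, mul_one]

lemma lambdaMin_mul_le [NeZero n] (A : Matrix (Fin n) (Fin n) ℝ) (hA : A.IsHermitian)
    (x : Fin n → ℝ) : lambdaMin A * (x ⬝ᵥ x) ≤ x ⬝ᵥ (A *ᵥ x) := by
  set b := hA.eigenvectorBasis with hb
  set xE : EuclideanSpace ℝ (Fin n) := (WithLp.equiv 2 (Fin n → ℝ)).symm x with hxE
  set c : Fin n → ℝ := fun i => (inner ℝ (b i) xE : ℝ) with hc
  have hxx : x ⬝ᵥ x = ∑ i, (c i)^2 := by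
    have h0 : (inner ℝ xE xE : ℝ) = x ⬝ᵥ x := dot_eq_inner xE xE
    rw [← h0]
    conv_lhs => rw [← b.sum_repr' xE]
    rw [sum_inner]
    refine Finset.sum_congr rfl fun i _ => ?_
    rw [real_inner_smul_left, b.sum_repr' xE]
    ring
  have hAx : ((WithLp.equiv 2 (Fin n → ℝ)).symm (A *ᵥ x)) = ∑ i, (c i * hA.eigenvalues i) • b i := by
    have hxr : x = ∑ i, c i • ⇑(b i) := by
      have h := congrArg (fun v : EuclideanSpace ℝ (Fin n) => WithLp.equiv 2 (Fin n → ℝ) v)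
        (b.sum_repr' xE)
      show (WithLp.ofLp xE) = ∑ i, c i • ⇑(b i)
      simpa [c] using h.symm
    rw [Equiv.symm_apply_eq]
    show (A *ᵥ x : Fin n → ℝ) = WithLp.equiv 2 (Fin n → ℝ) (∑ i, (c i * hA.eigenvalues i) • b i)
    have coe_sum : WithLp.equiv 2 (Fin n → ℝ) (∑ i, (c i * hA.eigenvalues i) • b i)
        = ∑ i, (c i * hA.eigenvalues i) • ⇑(b i) := by
      have := map_sum (WithLp.linearEquiv 2 ℝ (Fin n → ℝ))
        (fun i => (c i * hA.eigenvalues i) • b i) Finset.univ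
      simp only [WithLp.linearEquiv_apply] at this
      exact this
    rw [coe_sum]
    conv_lhs => rw [hxr]
    rw [← A.mulVecLin_apply, map_sum]
    refine Finset.sum_congr rfl fun i _ => ?_
    rw [LinearMap.map_smul, A.mulVecLin_apply, hA.mulVec_eigenvectorBasis, smul_smul, mul_comm]
  have hquad : x ⬝ᵥ (A *ᵥ x) = ∑ i, hA.eigenvalues i * (c i)^2 := by
    have h0 := dot_eq_inner xE ((WithLp.equiv 2 (Fin n → ℝ)).symm (A *ᵥ x))
    simp only [Equiv.apply_symm_apply] at h0
    rw [hxE] at h0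
    simp only [Equiv.apply_symm_apply] at h0
    rw [← hxE] at h0
    rw [← h0, hAx, inner_sum]
    refine Finset.sum_congr rfl fun i _ => ?_
    rw [real_inner_smul_right, real_inner_comm]
    show c i * hA.eigenvalues i * c i = _
    ring
  rw [hxx, hquad, Finset.mul_sum]
  refine Finset.sum_le_sum fun i _ => ?_
  have h1 : lambdaMin A ≤ hA.eigenvalues i := by
    rw [lambdaMin, dif_pos hA]
    exact ciInf_le (Set.finite_range _).bddBelow i
  nlinarith [sq_nonneg (c i)]
end helpers

/-- The trace-bounded dual function `g(λ) = −2λ₄ + min{0, λ_min(M(λ))}` (with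
`l 0 = λ₁, l 1 = λ₂, l 2 = λ₃, l 3 = λ₄`) has supremum `0`, attained at
`λ₁ = λ₂ = λ₃ = 0, λ₄ = −1/2`. Since the corresponding primal SDP with the added
trace bound `trace(X) ≤ 1` has optimal value `0`, the duality gap vanishes. -/
theorem trace_bounded_dual_gap_vanishes :
    let M : (Fin 4 → ℝ) → Matrix (Fin 3) (Fin 3) ℝ := fun l =>
      !![-l 2, 1/2 - l 3, -l 0;
         1/2 - l 3, 0, -l 1;
         -l 0, -l 1, 2 * l 3]
    let g : (Fin 4 → ℝ) → ℝ := fun l => -2 * l 3 + min 0 (lambdaMin (M l))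
    let C : Matrix (Fin 3) (Fin 3) ℝ := !![0, 1/2, 0; 1/2, 0, 0; 0, 0, 0]
    let B1 : Matrix (Fin 3) (Fin 3) ℝ := !![0, 0, 1; 0, 0, 0; 1, 0, 0]
    let B2 : Matrix (Fin 3) (Fin 3) ℝ := !![0, 0, 0; 0, 0, 1; 0, 1, 0]
    let B3 : Matrix (Fin 3) (Fin 3) ℝ := !![1, 0, 0; 0, 0, 0; 0, 0, 0]
    let B4 : Matrix (Fin 3) (Fin 3) ℝ := !![0, 1, 0; 1, 0, 0; 0, 0, -2]
    IsGreatest (Set.range g) 0 ∧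
    g ![0, 0, 0, -1/2] = 0 ∧
    IsLeast {v : ℝ | ∃ X : Matrix (Fin 3) (Fin 3) ℝ, X.PosSemidef ∧ X.trace ≤ 1 ∧
        ip B1 X = 0 ∧ ip B2 X = 0 ∧ ip B3 X = 0 ∧ ip B4 X = -2 ∧ v = ip C X} 0 := by
  intro M g C B1 B2 B3 B4
  have hM : ∀ l : Fin 4 → ℝ, (M l).IsHermitian := by
    intro l
    show (M l)ᴴ = M l
    ext i j
    fin_cases i <;> fin_cases j <;> simp [M, Matrix.conjTranspose_apply]
  -- upper bound
  have hub : ∀ l : Fin 4 → ℝ, g l ≤ 0 := by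
    intro l
    by_cases h4 : 0 ≤ l 3
    · have h1 : min 0 (lambdaMin (M l)) ≤ 0 := min_le_left _ _
      show -2 * l 3 + min 0 (lambdaMin (M l)) ≤ 0
      linarith
    · push_neg at h4
      have hx := lambdaMin_mul_le (M l) (hM l) ![0, 0, 1]
      have h1 : (![0,0,1] : Fin 3 → ℝ) ⬝ᵥ ![0,0,1] = 1 := by
        simp [dotProduct, Fin.sum_univ_three]
      have h2 : (![0,0,1] : Fin 3 → ℝ) ⬝ᵥ (M l *ᵥ ![0,0,1]) = 2 * l 3 := by
        simp [M, dotProduct, Matrix.mulVec, Fin.sum_univ_three]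
      rw [h1, h2, mul_one] at hx
      have h3 : min 0 (lambdaMin (M l)) ≤ 2 * l 3 := le_trans (min_le_right _ _) hx
      show -2 * l 3 + min 0 (lambdaMin (M l)) ≤ 0
      linarith
  -- value at the optimal point
  have hMl0 : M ![0, 0, 0, -1/2] = !![0, 1, 0; 1, 0, 0; 0, 0, -1] := by
    ext i j
    fin_cases i <;> fin_cases j <;> simp [M] <;> norm_num
  have hherm : (!![0, 1, 0; 1, 0, 0; 0, 0, -1] : Matrix (Fin 3) (Fin 3) ℝ).IsHermitian := by
    rw [← hMl0]; exact hM _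
  have hlam : lambdaMin (!![0, 1, 0; 1, 0, 0; 0, 0, -1] : Matrix (Fin 3) (Fin 3) ℝ) = -1 := by
    refine le_antisymm ?_ ?_
    · have hx := lambdaMin_mul_le _ hherm ![1, -1, 0]
      have h1 : (![1,-1,0] : Fin 3 → ℝ) ⬝ᵥ ![1,-1,0] = 2 := by
        simp [dotProduct, Fin.sum_univ_three]; norm_num
      have h2 : (![1,-1,0] : Fin 3 → ℝ) ⬝ᵥ ((!![0, 1, 0; 1, 0, 0; 0, 0, -1] : Matrix (Fin 3) (Fin 3) ℝ) *ᵥ ![1,-1,0]) = -2 := by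
        simp [dotProduct, Matrix.mulVec, Fin.sum_univ_three]; norm_num
      rw [h1, h2] at hx
      linarith
    · refine le_lambdaMin _ hherm _ fun x => ?_
      have hq : x ⬝ᵥ ((!![0, 1, 0; 1, 0, 0; 0, 0, -1] : Matrix (Fin 3) (Fin 3) ℝ) *ᵥ x)
          = 2 * (x 0 * x 1) - x 2 * x 2 := by
        simp [dotProduct, Matrix.mulVec, Fin.sum_univ_three, Matrix.vecHead, Matrix.vecTail]; ring
      have hxx : x ⬝ᵥ x = x 0 * x 0 + x 1 * x 1 + x 2 * x 2 := by
        simp [dotProduct, Fin.sum_univ_three]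
      rw [hq, hxx]
      nlinarith [sq_nonneg (x 0 + x 1)]
  have hg0 : g ![0, 0, 0, -1/2] = 0 := by
    show -2 * (![0,0,0,-1/2] : Fin 4 → ℝ) 3 + min 0 (lambdaMin (M ![0,0,0,-1/2])) = 0
    rw [hMl0, hlam]
    norm_num [Matrix.cons_val_three]
  refine ⟨⟨⟨![0,0,0,-1/2], hg0⟩, ?_⟩, hg0, ?_, ?_⟩
  · rintro y ⟨l, rfl⟩
    exact hub l
  -- primal feasibility of diag(0,0,1)
  · refine ⟨!![0,0,0;0,0,0;0,0,1], Matrix.PosSemidef.of_dotProduct_mulVec_nonneg ?_ ?_, ?_, ?_, ?_, ?_, ?_, ?_⟩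
    · show _ᴴ = _
      ext i j
      fin_cases i <;> fin_cases j <;> simp [Matrix.conjTranspose_apply, Matrix.vecHead, Matrix.vecTail]
    · intro x
      have : (star x) ⬝ᵥ ((!![0,0,0;0,0,0;0,0,1] : Matrix (Fin 3) (Fin 3) ℝ) *ᵥ x) = x 2 * x 2 := by
        simp [dotProduct, Matrix.mulVec, Fin.sum_univ_three]
      rw [this]
      exact mul_self_nonneg _
    · simp [Matrix.trace, Fin.sum_univ_three]
    · simp [ip, B1, Fin.sum_univ_three, Matrix.vecHead, Matrix.vecTail]
    · simp [ip, B2, Fin.sum_univ_three, Matrix.vecHead, Matrix.vecTail]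
    · simp [ip, B3, Fin.sum_univ_three, Matrix.vecHead, Matrix.vecTail]
    · simp [ip, B4, Fin.sum_univ_three, Matrix.vecHead, Matrix.vecTail]
    · simp [ip, C, Fin.sum_univ_three, Matrix.vecHead, Matrix.vecTail]
  -- lower bound
  · rintro v ⟨X, hpsd, htr, h1, h2, h3, h4, rfl⟩
    have hX00 : X 0 0 = 0 := by
      simpa [ip, B3, Fin.sum_univ_three, Matrix.vecHead, Matrix.vecTail] using h3
    have hs : X 0 1 + X 1 0 = 0 := by
      by_contra hne
      set s := X 0 1 + X 1 0 with hsdef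
      set t : ℝ := -(X 1 1 + 1) / s with ht
      have hq := hpsd.dotProduct_mulVec_nonneg ![t, 1, 0]
      have hform : (star (![t,1,0] : Fin 3 → ℝ)) ⬝ᵥ (X *ᵥ ![t,1,0])
          = t * t * X 0 0 + t * s + X 1 1 := by
        simp [dotProduct, Matrix.mulVec, Fin.sum_univ_three, hsdef]; ring
      rw [hform, hX00] at hq
      have hts : t * s = -(X 1 1 + 1) := by
        rw [ht]; field_simp
      rw [hts] at hq
      simp at hq
      linarith
    have : ip C X = 0 := by
      simp [ip, C, Fin.sum_univ_three, Matrix.vecHead, Matrix.vecTail]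
      linarith
    rw [this]
end
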